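/- Let ψ : ℝ^{2×2} → ℝ be rank-one convex with ψ(G) ≤ dist²(G, K) for all G ∈ ℝ^{2×2}. Then for every F ∈ ℝ^{2×2} and every η ≥ |Fw| one has ψ(F) ≤ g(|Fv|, η, det F), and symmetrically for every ξ ≥ |Fv| one has ψ(F) ≤ g(ξ, |Fw|, det F), where v = (1,1)/√2 and w = (1,−1)/√2. -/

import Mathlib

open Matrix

noncomputable section

def frobSq (F : Matrix (Fin 2) (Fin 2) ℝ) : ℝ := ∑ i, ∑ j, (F i j) ^ 2

def SO2 : Set (Matrix (Fin 2) (Fin 2) ℝ) := {Q | Qᵀ * Q = 1 ∧ Q.det = 1}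

def U1 (l : ℝ) : Matrix (Fin 2) (Fin 2) ℝ := !![l, 0; 0, 1 / l]

def U2 (l : ℝ) : Matrix (Fin 2) (Fin 2) ℝ := !![1 / l, 0; 0, l]

def Kset (l : ℝ) : Set (Matrix (Fin 2) (Fin 2) ℝ) :=
  {G | ∃ Q ∈ SO2, G = Q * U1 l ∨ G = Q * U2 l}

/-- Squared Frobenius distance from `F` to the set `K`. -/
def distSqK (l : ℝ) (F : Matrix (Fin 2) (Fin 2) ℝ) : ℝ :=
  sInf {r | ∃ G ∈ Kset l, r = frobSq (F - G)}

def vvec : Fin 2 → ℝ := ![1 / Real.sqrt 2, 1 / Real.sqrt 2]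

def wvec : Fin 2 → ℝ := ![1 / Real.sqrt 2, -(1 / Real.sqrt 2)]

def xF (F : Matrix (Fin 2) (Fin 2) ℝ) : ℝ := Real.sqrt (∑ i, (F.mulVec vvec i) ^ 2)

def yF (F : Matrix (Fin 2) (Fin 2) ℝ) : ℝ := Real.sqrt (∑ i, (F.mulVec wvec i) ^ 2)

def Afun (l x y d : ℝ) : ℝ :=
  (x ^ 2 + y ^ 2) * (l ^ 2 + 1 / l ^ 2) / 2
    + (l ^ 2 - 1 / l ^ 2) * Real.sqrt (x ^ 2 * y ^ 2 - d ^ 2) + 2 * d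

def gfun (l x y d : ℝ) : ℝ :=
  x ^ 2 + y ^ 2 + (l ^ 2 + 1 / l ^ 2) - 2 * Real.sqrt (Afun l x y d)

/-- A function `ψ` on 2×2 matrices is rank-one convex if it is convex along every
rank-one line `t ↦ F + t a⊗b`. -/
def RankOneConvex (ψ : Matrix (Fin 2) (Fin 2) ℝ → ℝ) : Prop :=
  ∀ (F : Matrix (Fin 2) (Fin 2) ℝ) (a b : Fin 2 → ℝ),
    ConvexOn ℝ Set.univ fun t : ℝ => ψ (F + t • vecMulVec a b)

/-- Any rank-one convex `ψ ≤ dist²(·,K)` satisfies `ψ(F) ≤ g(|Fv|, η, det F)` for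
every `η ≥ |Fw|`, and symmetrically `ψ(F) ≤ g(ξ, |Fw|, det F)` for every `ξ ≥ |Fv|`. -/
lemma frobSq_nonneg (F : Matrix (Fin 2) (Fin 2) ℝ) : 0 ≤ frobSq F := by
  unfold frobSq; positivity

lemma rot_mem_SO2 (p q : ℝ) (h : p^2 + q^2 = 1) : !![p, -q; q, p] ∈ SO2 := by
  constructor
  · ext i j
    fin_cases i <;> fin_cases j <;>
      simp [Matrix.mul_apply, Fin.sum_univ_two, Matrix.one_apply, Matrix.vecHead,
        Matrix.vecTail] <;> (first | ring1 | linear_combination h)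
  · rw [Matrix.det_fin_two_of]
    linear_combination h

lemma exists_Q (m00 m01 m10 m11 : ℝ) :
    ∃ Q ∈ SO2, Q 0 0 * m00 + Q 0 1 * m01 + Q 1 0 * m10 + Q 1 1 * m11
      = Real.sqrt ((m00 + m11)^2 + (m10 - m01)^2) := by
  set r := Real.sqrt ((m00 + m11)^2 + (m10 - m01)^2) with hr
  have harg : (0:ℝ) ≤ (m00 + m11)^2 + (m10 - m01)^2 := by positivity
  have hr2 : r^2 = (m00 + m11)^2 + (m10 - m01)^2 := Real.sq_sqrt harg
  have hrnn : 0 ≤ r := hr ▸ Real.sqrt_nonneg _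
  clear_value r
  rcases eq_or_ne r 0 with h0 | h0
  · have hz : (m00 + m11)^2 + (m10 - m01)^2 = 0 := by rw [← hr2, h0]; ring
    have h1 : m00 + m11 = 0 := by nlinarith [sq_nonneg (m00+m11), sq_nonneg (m10-m01)]
    refine ⟨1, ⟨by simp, by simp⟩, ?_⟩
    simp [Matrix.one_apply, h0]
    linarith
  · have hrpos : 0 < r := lt_of_le_of_ne hrnn (Ne.symm h0)
    have hpq : ((m00+m11)/r)^2 + ((m10-m01)/r)^2 = 1 := by
      field_simp
      linear_combination hr2.symm
    refine ⟨_, rot_mem_SO2 _ _ hpq, ?_⟩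
    simp [Matrix.vecHead, Matrix.vecTail]
    field_simp
    linear_combination hr2.symm

lemma sqrt2_sq : (Real.sqrt 2) ^ 2 = 2 := Real.sq_sqrt (by norm_num)

lemma sqrt2_ne : Real.sqrt 2 ≠ 0 := by positivity

lemma halfk : (1/Real.sqrt 2)^2 = (1:ℝ)/2 := by rw [div_pow, one_pow, sqrt2_sq]

lemma sumx_eq (a b c d : ℝ) :
    (∑ i, ((!![a,b;c,d] : Matrix (Fin 2) (Fin 2) ℝ).mulVec vvec i) ^ 2)
      = ((a+b)^2 + (c+d)^2)/2 := by
  simp [Matrix.mulVec, dotProduct, vvec, Fin.sum_univ_two, Matrix.vecHead, Matrix.vecTail]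
  field_simp
  rw [sqrt2_sq]; ring

lemma sumy_eq (a b c d : ℝ) :
    (∑ i, ((!![a,b;c,d] : Matrix (Fin 2) (Fin 2) ℝ).mulVec wvec i) ^ 2)
      = ((a-b)^2 + (c-d)^2)/2 := by
  simp [Matrix.mulVec, dotProduct, wvec, Fin.sum_univ_two, Matrix.vecHead, Matrix.vecTail]
  field_simp
  rw [sqrt2_sq]; ring

lemma xF_sq (a b c d : ℝ) : (xF !![a,b;c,d]) ^ 2 = ((a+b)^2 + (c+d)^2)/2 := by
  unfold xF
  rw [Real.sq_sqrt (by positivity), sumx_eq]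

lemma yF_sq (a b c d : ℝ) : (yF !![a,b;c,d]) ^ 2 = ((a-b)^2 + (c-d)^2)/2 := by
  unfold yF
  rw [Real.sq_sqrt (by positivity), sumy_eq]

lemma bddBelow_dists (l : ℝ) (F : Matrix (Fin 2) (Fin 2) ℝ) :
    BddBelow {r | ∃ G ∈ Kset l, r = frobSq (F - G)} := by
  refine ⟨0, ?_⟩
  rintro t ⟨G, hG, rfl⟩
  exact frobSq_nonneg _

lemma distSqK_le' (l : ℝ) (hl : 1 < l) (a b c d : ℝ) :
    distSqK l !![a,b;c,d] ≤ gfun l (xF !![a,b;c,d]) (yF !![a,b;c,d]) (!![a,b;c,d] : Matrix (Fin 2) (Fin 2) ℝ).det := by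
  have hl0 : (0:ℝ) < l := by linarith
  have hlne : l ≠ 0 := ne_of_gt hl0
  have hdet : (!![a,b;c,d] : Matrix (Fin 2) (Fin 2) ℝ).det = a*d - b*c := by
    rw [Matrix.det_fin_two_of]
  have hx2 := xF_sq a b c d
  have hy2 := yF_sq a b c d
  have hsq : (xF !![a,b;c,d])^2 * (yF !![a,b;c,d])^2 - ((!![a,b;c,d] : Matrix (Fin 2) (Fin 2) ℝ).det)^2
      = ((a^2+c^2-b^2-d^2)/2)^2 := by
    rw [hx2, hy2, hdet]; ring
  have hsqrt_s : Real.sqrt ((xF !![a,b;c,d])^2 * (yF !![a,b;c,d])^2 - ((!![a,b;c,d] : Matrix (Fin 2) (Fin 2) ℝ).det)^2)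
      = |(a^2+c^2-b^2-d^2)/2| := by
    rw [hsq]; exact Real.sqrt_sq_eq_abs _
  by_cases hs : 0 ≤ (a^2+c^2-b^2-d^2)/2
  · -- use U1
    obtain ⟨Q, hQ, hcombo⟩ := exists_Q (l*a) (b/l) (l*c) (d/l)
    set r := Real.sqrt ((l*a + d/l)^2 + (l*c - b/l)^2) with hrdef
    have hrnn : 0 ≤ r := Real.sqrt_nonneg _
    have hr2 : r^2 = (l*a + d/l)^2 + (l*c - b/l)^2 := Real.sq_sqrt (by positivity)
    have hQ00 : Q 0 0 ^2 + Q 1 0^2 = 1 := by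
      have h := congrFun (congrFun hQ.1 0) 0
      simp [Matrix.mul_apply, Fin.sum_univ_two, Matrix.one_apply] at h
      linear_combination h
    have hQ11 : Q 0 1 ^2 + Q 1 1^2 = 1 := by
      have h := congrFun (congrFun hQ.1 1) 1
      simp [Matrix.mul_apply, Fin.sum_univ_two, Matrix.one_apply] at h
      linear_combination h
    have hfrob : frobSq (!![a,b;c,d] - Q * U1 l) = a^2+b^2+c^2+d^2 + (l^2 + 1/l^2) - 2*r := by
      rw [← hcombo]
      unfold frobSq U1
      simp [Matrix.sub_apply, Matrix.mul_apply, Fin.sum_univ_two, Matrix.vecHead, Matrix.vecTail]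
      field_simp
      linear_combination (l^4 * hQ00 + hQ11) 
    have h1 : distSqK l !![a,b;c,d] ≤ frobSq (!![a,b;c,d] - Q * U1 l) :=
      csInf_le (bddBelow_dists l _) ⟨Q * U1 l, ⟨Q, hQ, Or.inl rfl⟩, rfl⟩
    have hA : Afun l (xF !![a,b;c,d]) (yF !![a,b;c,d]) (!![a,b;c,d] : Matrix (Fin 2) (Fin 2) ℝ).det = r^2 := by
      unfold Afun
      rw [hsqrt_s, abs_of_nonneg hs, hx2, hy2, hdet, hr2]
      field_simp
      ring
    have hgg : gfun l (xF !![a,b;c,d]) (yF !![a,b;c,d]) (!![a,b;c,d] : Matrix (Fin 2) (Fin 2) ℝ).det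
        = a^2+b^2+c^2+d^2 + (l^2+1/l^2) - 2*r := by
      unfold gfun
      rw [hA, Real.sqrt_sq hrnn]
      have hxy : (xF !![a,b;c,d])^2 + (yF !![a,b;c,d])^2 = a^2+b^2+c^2+d^2 := by
        rw [hx2, hy2]; ring
      linarith
    linarith
  · -- use U2
    obtain ⟨Q, hQ, hcombo⟩ := exists_Q (a/l) (l*b) (c/l) (l*d)
    set r := Real.sqrt ((a/l + l*d)^2 + (c/l - l*b)^2) with hrdef
    have hrnn : 0 ≤ r := Real.sqrt_nonneg _
    have hr2 : r^2 = (a/l + l*d)^2 + (c/l - l*b)^2 := Real.sq_sqrt (by positivity)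
    have hQ00 : Q 0 0 ^2 + Q 1 0^2 = 1 := by
      have h := congrFun (congrFun hQ.1 0) 0
      simp [Matrix.mul_apply, Fin.sum_univ_two, Matrix.one_apply] at h
      linear_combination h
    have hQ11 : Q 0 1 ^2 + Q 1 1^2 = 1 := by
      have h := congrFun (congrFun hQ.1 1) 1
      simp [Matrix.mul_apply, Fin.sum_univ_two, Matrix.one_apply] at h
      linear_combination h
    have hfrob : frobSq (!![a,b;c,d] - Q * U2 l) = a^2+b^2+c^2+d^2 + (l^2 + 1/l^2) - 2*r := by
      rw [← hcombo]
      unfold frobSq U2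
      simp [Matrix.sub_apply, Matrix.mul_apply, Fin.sum_univ_two, Matrix.vecHead, Matrix.vecTail]
      field_simp
      linear_combination (hQ00 + l^4 * hQ11)
    have h1 : distSqK l !![a,b;c,d] ≤ frobSq (!![a,b;c,d] - Q * U2 l) :=
      csInf_le (bddBelow_dists l _) ⟨Q * U2 l, ⟨Q, hQ, Or.inr rfl⟩, rfl⟩
    have hA : Afun l (xF !![a,b;c,d]) (yF !![a,b;c,d]) (!![a,b;c,d] : Matrix (Fin 2) (Fin 2) ℝ).det = r^2 := by
      unfold Afun
      rw [hsqrt_s, abs_of_nonpos (by linarith [not_le.mp hs]), hx2, hy2, hdet, hr2]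
      field_simp
      ring
    have hgg : gfun l (xF !![a,b;c,d]) (yF !![a,b;c,d]) (!![a,b;c,d] : Matrix (Fin 2) (Fin 2) ℝ).det
        = a^2+b^2+c^2+d^2 + (l^2+1/l^2) - 2*r := by
      unfold gfun
      rw [hA, Real.sqrt_sq hrnn]
      have hxy : (xF !![a,b;c,d])^2 + (yF !![a,b;c,d])^2 = a^2+b^2+c^2+d^2 := by
        rw [hx2, hy2]; ring
      linarith
    linarith

lemma distSqK_le (l : ℝ) (hl : 1 < l) (F : Matrix (Fin 2) (Fin 2) ℝ) :
    distSqK l F ≤ gfun l (xF F) (yF F) F.det := by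
  rw [Matrix.eta_fin_two F]
  exact distSqK_le' l hl _ _ _ _

lemma convex_interp (h : ℝ → ℝ) (hc : ConvexOn ℝ Set.univ h) (c t₁ t₂ : ℝ)
    (ht1 : 0 ≤ t₁) (ht2 : t₂ ≤ 0) (hh1 : h t₁ ≤ c) (hh2 : h t₂ ≤ c) : h 0 ≤ c := by
  rcases eq_or_lt_of_le ht1 with heq | h1pos
  · rw [← heq] at hh1; exact hh1
  · have hd : 0 < t₁ - t₂ := by linarith
    have ha : 0 ≤ -t₂/(t₁-t₂) := div_nonneg (by linarith) (by linarith)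
    have hb : 0 ≤ t₁/(t₁-t₂) := by positivity
    have hab : -t₂/(t₁-t₂) + t₁/(t₁-t₂) = 1 := by field_simp; ring
    have key := hc.2 (Set.mem_univ t₁) (Set.mem_univ t₂) ha hb hab
    have hzero : (-t₂/(t₁-t₂)) • t₁ + (t₁/(t₁-t₂)) • t₂ = (0:ℝ) := by
      simp only [smul_eq_mul]
      field_simp
      ring
    rw [hzero] at key
    calc h 0 ≤ (-t₂/(t₁-t₂)) • h t₁ + (t₁/(t₁-t₂)) • h t₂ := key
      _ ≤ (-t₂/(t₁-t₂)) * c + (t₁/(t₁-t₂)) * c := by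
          simp only [smul_eq_mul]
          gcongr
      _ = c := by rw [← add_mul, hab, one_mul]

lemma part1_aux (l : ℝ) (hl : 1 < l) (ψ : Matrix (Fin 2) (Fin 2) ℝ → ℝ)
    (hψ : RankOneConvex ψ) (hle : ∀ G, ψ G ≤ distSqK l G) (a b c d : ℝ)
    (η : ℝ) (hη : yF !![a,b;c,d] ≤ η) :
    ψ !![a,b;c,d] ≤ gfun l (xF !![a,b;c,d]) η (!![a,b;c,d] : Matrix (Fin 2) (Fin 2) ℝ).det := by
  have hy2 := yF_sq a b c d
  have hynn : 0 ≤ yF !![a,b;c,d] := Real.sqrt_nonneg _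
  have hηnn : 0 ≤ η := le_trans hynn hη
  have hη2 : ((a-b)^2 + (c-d)^2)/2 ≤ η^2 := by
    rw [← hy2]; exact pow_le_pow_left₀ hynn hη 2
  -- choose the unit vector
  obtain ⟨u, v, hnorm, hcross⟩ : ∃ u v : ℝ, u^2 + v^2 = 1 ∧ u*(d+c) = v*(a+b) := by
    by_cases hx0 : xF !![a,b;c,d] = 0
    · have hX2 : ((a+b)^2 + (c+d)^2)/2 = 0 := by
        rw [← xF_sq a b c d, hx0]; ring
      have hab : a + b = 0 := by nlinarith [sq_nonneg (a+b), sq_nonneg (c+d)]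
      have hcd : c + d = 0 := by nlinarith [sq_nonneg (a+b), sq_nonneg (c+d)]
      exact ⟨1, 0, by norm_num, by rw [show d + c = 0 by linarith]; ring⟩
    · refine ⟨(1/Real.sqrt 2)*(a+b)/(xF !![a,b;c,d]), (1/Real.sqrt 2)*(c+d)/(xF !![a,b;c,d]), ?_, by ring⟩
      have hx2 := xF_sq a b c d
      field_simp
      linear_combination (-2 : ℝ) * hx2 - (xF !![a,b;c,d])^2 * sqrt2_sq
  set p := (1/Real.sqrt 2)*(u*(a-b) + v*(c-d)) with hp
  have hD : 0 ≤ p^2 + η^2 - ((a-b)^2 + (c-d)^2)/2 := by nlinarith [sq_nonneg p]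
  set sD := Real.sqrt (p^2 + η^2 - ((a-b)^2 + (c-d)^2)/2) with hsD
  have hsD2 : sD^2 = p^2 + η^2 - ((a-b)^2 + (c-d)^2)/2 := Real.sq_sqrt hD
  have habs : |p| ≤ sD := by
    rw [← Real.sqrt_sq_eq_abs]
    exact Real.sqrt_le_sqrt (by linarith)
  have habs1 : p ≤ sD := le_trans (le_abs_self p) habs
  have habs2 : -p ≤ sD := le_trans (neg_le_abs p) habs
  -- the key bound at the two roots
  have key : ∀ t : ℝ, t^2 + 2*p*t = η^2 - ((a-b)^2 + (c-d)^2)/2 →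
      ψ (!![a,b;c,d] + t • vecMulVec ![u,v] wvec) ≤
        gfun l (xF !![a,b;c,d]) η (!![a,b;c,d] : Matrix (Fin 2) (Fin 2) ℝ).det := by
    intro t ht
    set Ft := !![a,b;c,d] + t • vecMulVec ![u,v] wvec with hFt
    have hxeq : xF Ft = xF !![a,b;c,d] := by
      unfold xF
      congr 1
      simp [hFt, Matrix.mulVec, dotProduct, vvec, wvec, vecMulVec_apply,
        Matrix.add_apply, Fin.sum_univ_two, Matrix.vecHead, Matrix.vecTail]
      ring
    have hdeteq : Ft.det = (!![a,b;c,d] : Matrix (Fin 2) (Fin 2) ℝ).det := by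
      rw [Matrix.det_fin_two, Matrix.det_fin_two]
      simp [hFt, wvec, vecMulVec_apply, Matrix.add_apply, Matrix.vecHead, Matrix.vecTail]
      linear_combination (t*(1/Real.sqrt 2)) * hcross
    have h00 : Ft.mulVec wvec 0 = (a - b)*(1/Real.sqrt 2) + t*u := by
      simp [hFt, Matrix.mulVec, dotProduct, wvec, vecMulVec_apply,
        Matrix.add_apply, Fin.sum_univ_two, Matrix.vecHead, Matrix.vecTail]
      linear_combination (2*t*u) * halfk
    have h01 : Ft.mulVec wvec 1 = (c - d)*(1/Real.sqrt 2) + t*v := by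
      simp [hFt, Matrix.mulVec, dotProduct, wvec, vecMulVec_apply,
        Matrix.add_apply, Fin.sum_univ_two, Matrix.vecHead, Matrix.vecTail]
      linear_combination (2*t*v) * halfk
    rw [hp] at ht
    have hwsum : (∑ i, (Ft.mulVec wvec i)^2) = η^2 := by
      rw [Fin.sum_univ_two, h00, h01]
      linear_combination ht + t^2*hnorm + ((a-b)^2+(c-d)^2)*halfk
    have hyeq : yF Ft = η := by
      unfold yF
      rw [hwsum, Real.sqrt_sq hηnn]
    calc ψ Ft ≤ distSqK l Ft := hle Ft
      _ ≤ gfun l (xF Ft) (yF Ft) Ft.det := distSqK_le l hl Ft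
      _ = gfun l (xF !![a,b;c,d]) η (!![a,b;c,d] : Matrix (Fin 2) (Fin 2) ℝ).det := by
          rw [hxeq, hyeq, hdeteq]
  have ht1 : (-p + sD)^2 + 2*p*(-p+sD) = η^2 - ((a-b)^2 + (c-d)^2)/2 := by
    linear_combination hsD2
  have ht2 : (-p - sD)^2 + 2*p*(-p-sD) = η^2 - ((a-b)^2 + (c-d)^2)/2 := by
    linear_combination hsD2
  have h0 : ψ (!![a,b;c,d] + (0:ℝ) • vecMulVec ![u,v] wvec) ≤
      gfun l (xF !![a,b;c,d]) η (!![a,b;c,d] : Matrix (Fin 2) (Fin 2) ℝ).det := by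
    exact convex_interp _ (hψ !![a,b;c,d] ![u,v] wvec) _ (-p + sD) (-p - sD)
      (by linarith) (by linarith) (key _ ht1) (key _ ht2)
  simpa only [zero_smul, add_zero] using h0

lemma part2_aux (l : ℝ) (hl : 1 < l) (ψ : Matrix (Fin 2) (Fin 2) ℝ → ℝ)
    (hψ : RankOneConvex ψ) (hle : ∀ G, ψ G ≤ distSqK l G) (a b c d : ℝ)
    (ξ : ℝ) (hξ : xF !![a,b;c,d] ≤ ξ) :
    ψ !![a,b;c,d] ≤ gfun l ξ (yF !![a,b;c,d]) (!![a,b;c,d] : Matrix (Fin 2) (Fin 2) ℝ).det := by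
  have hx2 := xF_sq a b c d
  have hxnn : 0 ≤ xF !![a,b;c,d] := Real.sqrt_nonneg _
  have hξnn : 0 ≤ ξ := le_trans hxnn hξ
  have hξ2 : ((a+b)^2 + (c+d)^2)/2 ≤ ξ^2 := by
    rw [← hx2]; exact pow_le_pow_left₀ hxnn hξ 2
  obtain ⟨u, v, hnorm, hcross⟩ : ∃ u v : ℝ, u^2 + v^2 = 1 ∧ u*(d-c) + v*(a-b) = 0 := by
    by_cases hy0 : yF !![a,b;c,d] = 0
    · have hY2 : ((a-b)^2 + (c-d)^2)/2 = 0 := by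
        rw [← yF_sq a b c d, hy0]; ring
      have hab : a - b = 0 := by nlinarith [sq_nonneg (a-b), sq_nonneg (c-d)]
      have hcd : c - d = 0 := by nlinarith [sq_nonneg (a-b), sq_nonneg (c-d)]
      exact ⟨1, 0, by norm_num, by rw [show d - c = 0 by linarith]; ring⟩
    · refine ⟨(1/Real.sqrt 2)*(a-b)/(yF !![a,b;c,d]), (1/Real.sqrt 2)*(c-d)/(yF !![a,b;c,d]), ?_, by ring⟩
      have hy2 := yF_sq a b c d
      field_simp
      linear_combination (-2 : ℝ) * hy2 - (yF !![a,b;c,d])^2 * sqrt2_sq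
  set p := (1/Real.sqrt 2)*(u*(a+b) + v*(c+d)) with hp
  have hD : 0 ≤ p^2 + ξ^2 - ((a+b)^2 + (c+d)^2)/2 := by nlinarith [sq_nonneg p]
  set sD := Real.sqrt (p^2 + ξ^2 - ((a+b)^2 + (c+d)^2)/2) with hsD
  have hsD2 : sD^2 = p^2 + ξ^2 - ((a+b)^2 + (c+d)^2)/2 := Real.sq_sqrt hD
  have habs : |p| ≤ sD := by
    rw [← Real.sqrt_sq_eq_abs]
    exact Real.sqrt_le_sqrt (by linarith)
  have habs1 : p ≤ sD := le_trans (le_abs_self p) habs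
  have habs2 : -p ≤ sD := le_trans (neg_le_abs p) habs
  have key : ∀ t : ℝ, t^2 + 2*p*t = ξ^2 - ((a+b)^2 + (c+d)^2)/2 →
      ψ (!![a,b;c,d] + t • vecMulVec ![u,v] vvec) ≤
        gfun l ξ (yF !![a,b;c,d]) (!![a,b;c,d] : Matrix (Fin 2) (Fin 2) ℝ).det := by
    intro t ht
    set Ft := !![a,b;c,d] + t • vecMulVec ![u,v] vvec with hFt
    have hyeq : yF Ft = yF !![a,b;c,d] := by
      unfold yF
      congr 1
      simp [hFt, Matrix.mulVec, dotProduct, vvec, wvec, vecMulVec_apply,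
        Matrix.add_apply, Fin.sum_univ_two, Matrix.vecHead, Matrix.vecTail]
      ring
    have hdeteq : Ft.det = (!![a,b;c,d] : Matrix (Fin 2) (Fin 2) ℝ).det := by
      rw [Matrix.det_fin_two, Matrix.det_fin_two]
      simp [hFt, vvec, vecMulVec_apply, Matrix.add_apply, Matrix.vecHead, Matrix.vecTail]
      linear_combination (t*(1/Real.sqrt 2)) * hcross
    have h00 : Ft.mulVec vvec 0 = (a + b)*(1/Real.sqrt 2) + t*u := by
      simp [hFt, Matrix.mulVec, dotProduct, vvec, vecMulVec_apply,
        Matrix.add_apply, Fin.sum_univ_two, Matrix.vecHead, Matrix.vecTail]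
      linear_combination (2*t*u) * halfk
    have h01 : Ft.mulVec vvec 1 = (c + d)*(1/Real.sqrt 2) + t*v := by
      simp [hFt, Matrix.mulVec, dotProduct, vvec, vecMulVec_apply,
        Matrix.add_apply, Fin.sum_univ_two, Matrix.vecHead, Matrix.vecTail]
      linear_combination (2*t*v) * halfk
    rw [hp] at ht
    have hxsum : (∑ i, (Ft.mulVec vvec i)^2) = ξ^2 := by
      rw [Fin.sum_univ_two, h00, h01]
      linear_combination ht + t^2*hnorm + ((a+b)^2+(c+d)^2)*halfk
    have hxeq : xF Ft = ξ := by
      unfold xF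
      rw [hxsum, Real.sqrt_sq hξnn]
    calc ψ Ft ≤ distSqK l Ft := hle Ft
      _ ≤ gfun l (xF Ft) (yF Ft) Ft.det := distSqK_le l hl Ft
      _ = gfun l ξ (yF !![a,b;c,d]) (!![a,b;c,d] : Matrix (Fin 2) (Fin 2) ℝ).det := by
          rw [hxeq, hyeq, hdeteq]
  have ht1 : (-p + sD)^2 + 2*p*(-p+sD) = ξ^2 - ((a+b)^2 + (c+d)^2)/2 := by
    linear_combination hsD2
  have ht2 : (-p - sD)^2 + 2*p*(-p-sD) = ξ^2 - ((a+b)^2 + (c+d)^2)/2 := by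
    linear_combination hsD2
  have h0 : ψ (!![a,b;c,d] + (0:ℝ) • vecMulVec ![u,v] vvec) ≤
      gfun l ξ (yF !![a,b;c,d]) (!![a,b;c,d] : Matrix (Fin 2) (Fin 2) ℝ).det := by
    exact convex_interp _ (hψ !![a,b;c,d] ![u,v] vvec) _ (-p + sD) (-p - sD)
      (by linarith) (by linarith) (key _ ht1) (key _ ht2)
  simpa only [zero_smul, add_zero] using h0

theorem rankOneConvex_le_g (l : ℝ) (hl : 1 < l)
    (ψ : Matrix (Fin 2) (Fin 2) ℝ → ℝ) (hψ : RankOneConvex ψ)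
    (hle : ∀ G, ψ G ≤ distSqK l G) (F : Matrix (Fin 2) (Fin 2) ℝ) :
    (∀ η : ℝ, yF F ≤ η → ψ F ≤ gfun l (xF F) η F.det) ∧
    (∀ ξ : ℝ, xF F ≤ ξ → ψ F ≤ gfun l ξ (yF F) F.det) := by
  constructor
  · intro η hη
    rw [Matrix.eta_fin_two F] at hη ⊢
    exact part1_aux l hl ψ hψ hle _ _ _ _ η hη
  · intro ξ hξ
    rw [Matrix.eta_fin_two F] at hξ ⊢
    exact part2_aux l hl ψ hψ hle _ _ _ _ ξ hξ
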